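/- Let $f(x) = Ax - ax^2$ with $A \in (1,2)$, $a>0$, $g_* = (A-1)/a$, $\omega_0 \in (0,1)$, and $(\bar g_n)_{n\in\mathbb{Z}}$ the orbit with $\bar g_0 = \omega_0 g_*$. For any integers $n \le p \le -1$, $\prod_{n \le j \le p} \frac{A}{f'(\bar g_j)} \le \exp\!\left[\frac{\omega_0\bigl(2 - A + \sqrt{A^2 - 4\omega_0(A-1)}\bigr)}{(1-\omega_0)\bigl(A - 2\omega_0(A-1)\bigr)}\right]$. -/

import Mathlib

set_option maxHeartbeats 1000000 in
/-- for `n ≤ p ≤ -1`,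
`∏_{n≤j≤p} A/f'(ḡ_j) ≤ exp[ ω₀(2-A+√(A²-4ω₀(A-1))) / ((1-ω₀)(A-2ω₀(A-1))) ]`. -/
theorem stmt_9 (A a : ℝ) (hA1 : 1 < A) (hA2 : A < 2) (ha : 0 < a)
    (f : ℝ → ℝ) (hf : ∀ x, f x = A * x - a * x ^ 2)
    (gs : ℝ) (hgs : gs = (A - 1) / a)
    (ω0 : ℝ) (hω0 : ω0 ∈ Set.Ioo (0 : ℝ) 1)
    (gbar : ℤ → ℝ) (hmem : ∀ n : ℤ, gbar n ∈ Set.Ioo 0 gs)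
    (h0 : gbar 0 = ω0 * gs) (hrec : ∀ n : ℤ, gbar (n + 1) = f (gbar n)) :
    ∀ n p : ℤ, n ≤ p → p ≤ -1 →
      ∏ j ∈ Finset.Icc n p, A / (A - 2 * a * gbar j) ≤
        Real.exp (ω0 * (2 - A + Real.sqrt (A ^ 2 - 4 * ω0 * (A - 1))) /
          ((1 - ω0) * (A - 2 * ω0 * (A - 1)))) := by
  obtain ⟨hω0a, hω0b⟩ := hω0
  have hA0 : (0:ℝ) < A := by linarith
  have hgs0 : 0 < gs := by rw [hgs]; exact div_pos (by linarith) ha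
  have hags : a * gs = A - 1 := by rw [hgs]; field_simp
  have hωgs : 0 < ω0 * gs := mul_pos hω0a hgs0
  have hD : 0 < A^2 - 4*ω0*(A-1) := by
    nlinarith [sq_nonneg (A-2), mul_pos (by linarith : (0:ℝ) < A-1) (by linarith : (0:ℝ) < 1-ω0)]
  set s := Real.sqrt (A^2 - 4*ω0*(A-1)) with hsdef
  have hs2 : s^2 = A^2 - 4*ω0*(A-1) := Real.sq_sqrt hD.le
  have hs0 : 0 < s := Real.sqrt_pos.mpr hD
  have hsA : 2 - A < s := by
    nlinarith [hs2, hs0, mul_pos (by linarith : (0:ℝ) < A-1) (by linarith : (0:ℝ) < 1-ω0)]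
  set ρ := 2/(A+s) with hρdef
  have hAs : 0 < A + s := by linarith
  have hρ0 : 0 < ρ := div_pos two_pos hAs
  have hρ1 : ρ < 1 := by rw [hρdef, div_lt_one hAs]; linarith
  have h1ρ : 0 < 1 - ρ := by linarith
  have hd0 : 0 < A - 2*ω0*(A-1) := by
    nlinarith [mul_pos (by linarith : (0:ℝ) < 1-ω0) (by linarith : (0:ℝ) < A-1)]
  set c := 2*ω0*(A-1)/A with hcdef
  have hc1 : c < 1 := by rw [hcdef, div_lt_one hA0]; linarith
  have h1c : 0 < 1 - c := by linarith
  clear_value s ρ c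
  -- step lemma
  have hstep : ∀ j : ℤ, gbar (j+1) ≤ ω0*gs → gbar j ≤ ρ * gbar (j+1) := by
    intro j hle
    obtain ⟨hg0j, hgltj⟩ := hmem j
    have hrj : gbar (j+1) = A*gbar j - a*(gbar j)^2 := by rw [hrec, hf]
    have hagj : a * gbar j < A - 1 := by
      have := (mul_lt_mul_iff_right₀ ha).mpr hgltj; rwa [hags] at this
    have hden : 0 < A - 2*a*gbar j := by linarith
    have hagj1 : a * gbar (j+1) ≤ ω0*(A-1) := by
      calc a * gbar (j+1) ≤ a * (ω0*gs) := (mul_le_mul_iff_right₀ ha).mpr hle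
        _ = ω0*(A-1) := by rw [← hags]; ring
    have h1 : A^2 - 4*ω0*(A-1) ≤ (A - 2*a*gbar j)^2 := by
      rw [hrj] at hagj1; nlinarith [hagj1]
    have hsle : s ≤ A - 2*a*gbar j := by
      calc s ≤ Real.sqrt ((A - 2*a*gbar j)^2) := by rw [hsdef]; exact Real.sqrt_le_sqrt h1
        _ = A - 2*a*gbar j := Real.sqrt_sq hden.le
    have h2 : gbar j * (A + s) ≤ 2 * gbar (j+1) := by
      have := mul_le_mul_of_nonneg_left (by linarith : A + s ≤ 2*A - 2*a*gbar j) hg0j.le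
      calc gbar j * (A + s) ≤ gbar j * (2*A - 2*a*gbar j) := this
        _ = 2 * gbar (j+1) := by rw [hrj]; ring
    rw [hρdef, show 2/(A+s) * gbar (j+1) = 2 * gbar (j+1) / (A+s) by ring,
      le_div_iff₀ hAs]
    linarith
  -- decay lemma
  have hdec : ∀ k : ℕ, gbar (-(k:ℤ)) ≤ ω0 * gs * ρ^k := by
    intro k
    induction k with
    | zero => simpa using le_of_eq h0
    | succ k ih =>
      have hk1 : ρ^k ≤ 1 := pow_le_one₀ hρ0.le hρ1.le
      have hle : gbar (-(k:ℤ)) ≤ ω0*gs :=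
        le_trans ih (mul_le_of_le_one_right hωgs.le hk1)
      have harg : (-(↑(k+1)):ℤ) + 1 = -(k:ℤ) := by push_cast; ring
      have hst := hstep (-(↑(k+1)):ℤ)
      rw [harg] at hst
      calc gbar (-(↑(k+1)):ℤ) ≤ ρ * gbar (-(k:ℤ)) := hst hle
        _ ≤ ρ * (ω0*gs*ρ^k) := by exact mul_le_mul_of_nonneg_left ih hρ0.le
        _ = ω0*gs*ρ^(k+1) := by ring
  intro n p hnp hp
  have hjle : ∀ j ∈ Finset.Icc n p, gbar j ≤ ω0 * gs * ρ^((-j).toNat) := by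
    intro j hj
    rw [Finset.mem_Icc] at hj
    have hjn : (-(((-j).toNat : ℕ)) : ℤ) = j := by omega
    have := hdec (-j).toNat
    rwa [hjn] at this
  have hjle' : ∀ j ∈ Finset.Icc n p, gbar j ≤ ω0 * gs := by
    intro j hj
    exact le_trans (hjle j hj) (mul_le_of_le_one_right hωgs.le
      (pow_le_one₀ hρ0.le hρ1.le))
  -- geometric sum bound
  have hgeom : ∀ m : ℕ, ∑ k ∈ Finset.Icc 1 m, ρ^k = (ρ - ρ^(m+1))/(1-ρ) := by
    intro m
    induction m with
    | zero => simp
    | succ m ih =>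
      rw [Finset.sum_Icc_succ_top (by omega), ih]
      field_simp
      ring
  have hsum_pow : ∑ j ∈ Finset.Icc n p, ρ^((-j).toNat) ≤ ρ/(1-ρ) := by
    have hinj : ∀ x ∈ Finset.Icc n p, ∀ y ∈ Finset.Icc n p,
        (-x).toNat = (-y).toNat → x = y := by
      intro x hx y hy h
      rw [Finset.mem_Icc] at hx hy
      omega
    rw [← Finset.sum_image hinj]
    have hsub : (Finset.Icc n p).image (fun j => (-j).toNat) ⊆
        Finset.Icc 1 (-n).toNat := by
      intro k hk
      simp only [Finset.mem_image, Finset.mem_Icc] at hk ⊢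
      obtain ⟨j, hj, rfl⟩ := hk
      omega
    calc ∑ k ∈ (Finset.Icc n p).image (fun j => (-j).toNat), ρ^k
        ≤ ∑ k ∈ Finset.Icc 1 (-n).toNat, ρ^k :=
          Finset.sum_le_sum_of_subset_of_nonneg hsub
            (fun k _ _ => (pow_pos hρ0 k).le)
      _ = (ρ - ρ^((-n).toNat+1))/(1-ρ) := hgeom _
      _ ≤ ρ/(1-ρ) := by
          have hpp := (pow_pos hρ0 ((-n).toNat+1)).le
          gcongr
          linarith
  -- per-term bound
  have hterm : ∀ j ∈ Finset.Icc n p,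
      A / (A - 2*a*gbar j) ≤ Real.exp ((2*a*gbar j/A)/(1-c)) := by
    intro j hj
    obtain ⟨hg0j, hgltj⟩ := hmem j
    have hagj : a * gbar j < A - 1 := by
      have := (mul_lt_mul_iff_right₀ ha).mpr hgltj; rwa [hags] at this
    have hden : 0 < A - 2*a*gbar j := by linarith
    have hy : a * gbar j ≤ ω0*(A-1) := by
      have h1 := hjle' j hj
      calc a * gbar j ≤ a * (ω0*gs) := by nlinarith
        _ = ω0*(A-1) := by rw [← hags]; ring
    have hy0 : 0 < a * gbar j := mul_pos ha hg0j
    have hz : (2*a*gbar j/A)/(1-c) = 2*a*gbar j/(A - 2*ω0*(A-1)) := by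
      rw [hcdef]
      field_simp
    rw [hz]
    have hkey : A / (A - 2*a*gbar j) ≤ 1 + 2*a*gbar j/(A - 2*ω0*(A-1)) := by
      rw [div_le_iff₀ hden]
      rw [show (1 + 2*a*gbar j/(A - 2*ω0*(A-1))) =
        ((A - 2*ω0*(A-1)) + 2*a*gbar j)/(A - 2*ω0*(A-1)) by field_simp]
      rw [div_mul_eq_mul_div, le_div_iff₀ hd0]
      nlinarith [mul_nonneg hy0.le (by linarith : (0:ℝ) ≤ 2*ω0*(A-1) - 2*(a*gbar j))]
    calc A / (A - 2*a*gbar j) ≤ 1 + 2*a*gbar j/(A - 2*ω0*(A-1)) := hkey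
      _ ≤ Real.exp (2*a*gbar j/(A - 2*ω0*(A-1))) := by
          have := Real.add_one_le_exp (2*a*gbar j/(A - 2*ω0*(A-1)))
          linarith
  -- combine
  have hprod : ∏ j ∈ Finset.Icc n p, A / (A - 2*a*gbar j) ≤
      Real.exp (∑ j ∈ Finset.Icc n p, (2*a*gbar j/A)/(1-c)) := by
    rw [Real.exp_sum]
    apply Finset.prod_le_prod
    · intro j hj
      obtain ⟨hg0j, hgltj⟩ := hmem j
      have hagj : a * gbar j < A - 1 := by
        have := (mul_lt_mul_iff_right₀ ha).mpr hgltj; rwa [hags] at this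
      have hden : 0 < A - 2*a*gbar j := by linarith
      positivity
    · exact hterm
  refine le_trans hprod (Real.exp_le_exp.mpr ?_)
  -- sum bound
  have hK : (0:ℝ) < 2*a/(A*(1-c)) := by positivity
  have hsum1 : ∑ j ∈ Finset.Icc n p, (2*a*gbar j/A)/(1-c) =
      (∑ j ∈ Finset.Icc n p, gbar j) * (2*a/(A*(1-c))) := by
    rw [Finset.sum_mul]
    apply Finset.sum_congr rfl
    intro j _
    field_simp
  have hsum2 : ∑ j ∈ Finset.Icc n p, gbar j ≤ ω0*gs*(ρ/(1-ρ)) := by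
    calc ∑ j ∈ Finset.Icc n p, gbar j
        ≤ ∑ j ∈ Finset.Icc n p, ω0*gs*ρ^((-j).toNat) := Finset.sum_le_sum hjle
      _ = ω0*gs * ∑ j ∈ Finset.Icc n p, ρ^((-j).toNat) := by rw [Finset.mul_sum]
      _ ≤ ω0*gs*(ρ/(1-ρ)) := by
          exact mul_le_mul_of_nonneg_left hsum_pow hωgs.le
  have heq : ω0*gs*(ρ/(1-ρ)) * (2*a/(A*(1-c))) =
      ω0 * (2 - A + s) / ((1 - ω0) * (A - 2 * ω0 * (A - 1))) := by
    have hkey2 : (2-A+s)*(A+s-2) = 4*(A-1)*(1-ω0) := by linear_combination hs2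
    have h2As : 0 < A + s - 2 := by linarith
    have hρeq : ρ/(1-ρ) = 2/(A+s-2) := by
      rw [hρdef]; field_simp
    have hceq : 2*a/(A*(1-c)) = 2*a/(A - 2*ω0*(A-1)) := by
      rw [hcdef]; field_simp
    rw [hρeq, hceq, hgs]
    have hLHS : ω0 * ((A - 1) / a) * (2 / (A + s - 2)) *
        (2 * a / (A - 2 * ω0 * (A - 1))) =
        (4*ω0*(A-1)) / ((A+s-2) * (A - 2*ω0*(A-1))) := by
      field_simp
      ring
    rw [hLHS, div_eq_div_iff (ne_of_gt (mul_pos h2As hd0))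
      (ne_of_gt (mul_pos (by linarith : (0:ℝ) < 1 - ω0) hd0))]
    linear_combination (-(ω0 * (A - 2*ω0*(A-1)))) * hkey2
  rw [hsum1, ← heq]
  exact mul_le_mul_of_nonneg_right hsum2 hK.le
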